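/- arXiv:1211.5509 — 5 statements merged into one kernel-verified Lean document; each statement's English description precedes it below -/
import Mathlib

section
/- Every σ-compact locally compact topological group G has a cocompact closed separable subgroup, i.e., there is a closed subgroup H of G which is separable (has a countable dense subset) such that the quotient space G/H is compact. -/
open Set TopologicalSpace Pointwise

private lemma countable_subgroup_closure {G : Type*} [Group G] {D : Set G}
    (hD : D.Countable) : (Subgroup.closure D : Set G).Countable := by
  have hDinv : (D⁻¹).Countable := by
    rw [← Set.image_inv_eq_inv]; exact hD.image _
  have hE : (D ∪ D⁻¹).Countable := hD.union hDinv
  haveI : Countable ↥(D ∪ D⁻¹) := hE.to_subtype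
  have key : (Subgroup.closure D : Set G) ⊆
      Set.range (fun l : List ↥(D ∪ D⁻¹) => (l.map Subtype.val).prod) := by
    intro x hx
    have hx' : x ∈ Submonoid.closure (D ∪ D⁻¹) := by
      rw [← Subgroup.closure_toSubmonoid] at *; exact hx
    obtain ⟨l, hl, rfl⟩ := Submonoid.exists_list_of_mem_closure hx'
    refine ⟨l.attach.map fun y => ⟨y.1, hl y.1 y.2⟩, ?_⟩
    simp [List.map_map, Function.comp_def]
  exact (Set.countable_range _).mono key

/-- Every σ-compact locally compact topological group `G` has a cocompact
closed separable subgroup: a closed subgroup `H` which is separable as a topological space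
and such that the quotient space `G/H` is compact. -/
theorem stmt2 {G : Type*} [Group G] [TopologicalSpace G] [IsTopologicalGroup G]
    [LocallyCompactSpace G] [SigmaCompactSpace G] :
    ∃ H : Subgroup G, IsClosed (H : Set G) ∧
      TopologicalSpace.SeparableSpace H ∧ CompactSpace (G ⧸ H) := by
  -- a compact neighbourhood of 1
  obtain ⟨K, hK, hKmem⟩ := exists_compact_mem_nhds (1 : G)
  have h1K : (1 : G) ∈ interior K := mem_interior_iff_mem_nhds.2 hKmem
  -- cover each compact piece by finitely many translates of `interior K`
  have cover : ∀ n : ℕ, ∃ t : Finset G,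
      compactCovering G n ⊆ ⋃ g ∈ t, g • interior K := by
    intro n
    apply (isCompact_compactCovering G n).elim_finite_subcover
      (fun g : G => g • interior K) (fun g => isOpen_interior.smul g)
    intro x _
    exact Set.mem_iUnion.2 ⟨x, by
      rw [Set.mem_smul_set_iff_inv_smul_mem]; simpa using h1K⟩
  choose t ht using cover
  set D : Set G := ⋃ n, (t n : Set G) with hDdef
  have hDcount : D.Countable := Set.countable_iUnion fun n => (t n).countable_toSet
  set H : Subgroup G := (Subgroup.closure D).topologicalClosure with hHdef
  have hHclosed : IsClosed (H : Set G) := Subgroup.isClosed_topologicalClosure _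
  -- D generates a countable subgroup dense in H
  have hsub : (Subgroup.closure D : Set G) ⊆ (H : Set G) :=
    Subgroup.le_topologicalClosure _
  have hHeq : (H : Set G) = closure (Subgroup.closure D : Set G) :=
    Subgroup.topologicalClosure_coe
  refine ⟨H, hHclosed, ?_, ?_⟩
  · -- separable
    refine ⟨⟨Subtype.val ⁻¹' (Subgroup.closure D : Set G), ?_, ?_⟩⟩
    · exact (countable_subgroup_closure hDcount).preimage Subtype.val_injective
    · rw [Subtype.dense_iff]
      intro x hx
      refine closure_mono ?_ (hHeq ▸ hx)
      intro y hy
      exact ⟨⟨y, hsub hy⟩, hy, rfl⟩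
  · -- cocompact: G = K⁻¹ * H, so G/H is the image of the compact set K⁻¹
    have hGcov : ∀ g : G, ∃ k ∈ K, QuotientGroup.mk (s := H) k⁻¹ = QuotientGroup.mk g := by
      intro g
      have : g⁻¹ ∈ ⋃ n, compactCovering G n := by
        rw [iUnion_compactCovering]; trivial
      obtain ⟨n, hn⟩ := Set.mem_iUnion.1 this
      have := ht n hn
      simp only [Set.mem_iUnion] at this
      obtain ⟨a, hat, hmem⟩ := this
      rw [Set.mem_smul_set_iff_inv_smul_mem] at hmem
      have hk : a⁻¹ * g⁻¹ ∈ K := interior_subset (by simpa using hmem)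
      refine ⟨a⁻¹ * g⁻¹, hk, ?_⟩
      rw [QuotientGroup.eq]
      have haD : a ∈ D := Set.mem_iUnion.2 ⟨n, hat⟩
      have haH : a⁻¹ ∈ H := H.inv_mem (hsub (Subgroup.subset_closure haD))
      simpa [mul_assoc] using haH
    constructor
    have : (Set.univ : Set (G ⧸ H)) = (fun k : G => QuotientGroup.mk (s := H) k⁻¹) '' K := by
      apply Set.eq_of_subset_of_subset _ (Set.subset_univ _)
      rintro x -
      obtain ⟨g, rfl⟩ := QuotientGroup.mk_surjective x
      obtain ⟨k, hk, hkeq⟩ := hGcov g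
      exact ⟨k, hk, hkeq⟩
    rw [this]
    exact hK.image (continuous_quotient_mk'.comp continuous_inv)
end

section
/- Let f : ℚ_p → G be a nontrivial continuous group homomorphism from the additive group of p-adic numbers to a totally disconnected locally compact group G. Then f is a proper map, and either the kernel of f is a compact open subgroup of ℚ_p, or f is a topological isomorphism onto its closed image. -/
open Topology Set Filter

open scoped Pointwise

section VanDantzig

variable {G : Type*} [Group G] [TopologicalSpace G] [IsTopologicalGroup G]

/-- Variant of `TopologicalGroup.exist_mul_closure_nhd` for a compact open set in a
(not necessarily compact) topological group. -/
private lemma exist_mul_closure_nhd' {W : Set G} (Wcpt : IsCompact W) (Wopen : IsOpen W) :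
    ∃ T ∈ 𝓝 (1 : G), W * T ⊆ W := by
  apply Wcpt.induction_on (p := fun S ↦ ∃ T ∈ 𝓝 (1 : G), S * T ⊆ W)
    ⟨Set.univ, by simp only [univ_mem, empty_mul, empty_subset, and_self]⟩
    (fun _ _ huv ⟨T, hT, mem⟩ ↦ ⟨T, hT, (mul_subset_mul_right huv).trans mem⟩)
    (fun U V ⟨T₁, hT₁, mem1⟩ ⟨T₂, hT₂, mem2⟩ ↦ ⟨T₁ ∩ T₂, inter_mem hT₁ hT₂, by
      rw [union_mul]
      exact union_subset ((mul_subset_mul_left inter_subset_left).trans mem1)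
        ((mul_subset_mul_left inter_subset_right).trans mem2)⟩)
  intro x memW
  have : (x, 1) ∈ (fun p : G × G ↦ p.1 * p.2) ⁻¹' W := by simp [memW]
  rcases isOpen_prod_iff.mp (continuous_mul.isOpen_preimage W Wopen) x 1 this with
    ⟨U, V, Uopen, Vopen, xmemU, onememV, prodsub⟩
  have h6 : U * V ⊆ W := mul_subset_iff.mpr (fun _ hx _ hy ↦ prodsub (mk_mem_prod hx hy))
  exact ⟨U ∩ W, ⟨U, Uopen.mem_nhds xmemU, W, fun _ a ↦ a, rfl⟩,
    V, IsOpen.mem_nhds Vopen onememV, fun _ a ↦ h6 ((mul_subset_mul_right inter_subset_left) a)⟩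

/-- Variant of `TopologicalGroup.exist_openSubgroup_sub_clopen_nhd_of_one` : in any topological
group, any compact open neighbourhood of `1` contains an open subgroup. -/
private lemma exist_openSubgroup' {W : Set G} (Wcpt : IsCompact W) (Wopen : IsOpen W)
    (einW : (1 : G) ∈ W) : ∃ H : Subgroup G, IsOpen (H : Set G) ∧ (H : Set G) ⊆ W := by
  obtain ⟨S, Smemnhds, mulclose⟩ := exist_mul_closure_nhd' Wcpt Wopen
  obtain ⟨U, UsubS, Uopen, onememU⟩ := mem_nhds_iff.mp Smemnhds
  set V : Set G := U ∩ U⁻¹ with hV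
  have Vnhd : V ∈ 𝓝 (1 : G) := by
    simp only [hV]
    exact inter_mem (Uopen.mem_nhds onememU) ((Uopen.inv).mem_nhds (by simpa using onememU))
  have Vinv : V⁻¹ = V := by simp [hV, inter_comm]
  have Vopen : IsOpen V := Uopen.inter Uopen.inv
  have Vmul : W * V ⊆ W := fun a ha ↦
    mulclose (mul_subset_mul_left UsubS (mul_subset_mul_left inter_subset_left ha))
  let S' : Subgroup G :=
    { carrier := ⋃ n, V ^ (n + 1)
      mul_mem' := fun ha hb ↦ by
        rcases mem_iUnion.mp ha with ⟨k, hk⟩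
        rcases mem_iUnion.mp hb with ⟨l, hl⟩
        apply mem_iUnion.mpr
        use k + 1 + l
        rw [add_assoc, pow_add]
        exact Set.mul_mem_mul hk hl
      one_mem' := by
        apply mem_iUnion.mpr
        use 0
        simp [mem_of_mem_nhds Vnhd]
      inv_mem' := fun ha ↦ by
        rcases mem_iUnion.mp ha with ⟨k, hk⟩
        apply mem_iUnion.mpr
        use k
        rw [← Vinv]
        simpa only [inv_pow, Set.mem_inv, inv_inv] using hk }
  have hop : IsOpen (⋃ n, V ^ (n + 1)) := by
    refine isOpen_iUnion (fun n ↦ ?_)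
    rw [pow_succ]
    exact Vopen.mul_left
  refine ⟨S', hop, ?_⟩
  have mulVpow (n : ℕ) : W * V ^ (n + 1) ⊆ W := by
    induction' n with n ih
    · simpa using Vmul
    · rw [pow_succ, ← mul_assoc]
      exact (Set.mul_subset_mul_right ih).trans Vmul
  have hsub (n : ℕ) : V ^ (n + 1) ⊆ W * V ^ (n + 1) := by
    intro x xin
    rw [Set.mem_mul]
    exact ⟨1, einW, x, xin, one_mul x⟩
  exact iUnion_subset fun i a ha ↦ mulVpow i (hsub i ha)

end VanDantzig

section Padic

variable {p : ℕ} [Fact p.Prime]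

/-- In a closed additive subgroup of `ℚ_[p]`, together with any element `x` it contains the whole
ball of radius `‖x‖`. -/
private lemma padic_mem_of_norm_le {H : AddSubgroup ℚ_[p]} (hH : IsClosed (H : Set ℚ_[p]))
    {x : ℚ_[p]} (hx : x ∈ H) {y : ℚ_[p]} (hxy : ‖y‖ ≤ ‖x‖) : y ∈ H := by
  rcases eq_or_ne x 0 with rfl | hx0
  · have hy : y = 0 := norm_le_zero_iff.mp (by simpa using hxy)
    simpa [hy] using H.zero_mem
  · have hxpos : (0 : ℝ) < ‖x‖ := norm_pos_iff.mpr hx0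
    have hc : ‖y / x‖ ≤ 1 := by
      rw [norm_div]
      exact (div_le_one hxpos).mpr hxy
    set z : ℤ_[p] := ⟨y / x, hc⟩ with hzdef
    have hcl : y ∈ closure (H : Set ℚ_[p]) := by
      rw [Metric.mem_closure_iff]
      intro ε hε
      obtain ⟨n, hn⟩ := PadicInt.denseRange_intCast.exists_dist_lt z (div_pos hε hxpos)
      refine ⟨(n : ℤ) • x, H.zsmul_mem hx n, ?_⟩
      have h2 : y - (n : ℤ) • x = (y / x - (n : ℚ_[p])) * x := by
        rw [zsmul_eq_mul]
        field_simp
      have h3 : dist z (n : ℤ_[p]) = ‖y / x - (n : ℚ_[p])‖ := by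
        rw [dist_eq_norm, PadicInt.norm_def]
        push_cast
        rfl
      have : dist y ((n : ℤ) • x) = ‖y / x - (n : ℚ_[p])‖ * ‖x‖ := by
        rw [dist_eq_norm, h2, norm_mul]
      rw [this, ← h3]
      calc dist z (n : ℤ_[p]) * ‖x‖ < ε / ‖x‖ * ‖x‖ := by
            exact mul_lt_mul_of_pos_right hn hxpos
        _ = ε := div_mul_cancel₀ ε (ne_of_gt hxpos)
    rwa [hH.closure_eq] at hcl

/-- A proper open additive subgroup of `ℚ_[p]` is compact. -/
private lemma padic_open_addSubgroup_compact {H : AddSubgroup ℚ_[p]}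
    (hO : IsOpen (H : Set ℚ_[p])) (hne : H ≠ ⊤) : IsCompact (H : Set ℚ_[p]) := by
  have hcl : IsClosed (H : Set ℚ_[p]) := H.isClosed_of_isOpen hO
  by_cases hb : ∃ C : ℝ, ∀ x ∈ H, ‖x‖ ≤ C
  · obtain ⟨C, hC⟩ := hb
    exact (isCompact_closedBall (0 : ℚ_[p]) C).of_isClosed_subset hcl
      (fun x hx ↦ Metric.mem_closedBall.mpr (by simpa [dist_zero_right] using hC x hx))
  · exfalso
    apply hne
    push_neg at hb
    ext y
    simp only [AddSubgroup.mem_top, iff_true]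
    obtain ⟨x, hxH, hxn⟩ := hb ‖y‖
    exact padic_mem_of_norm_le hcl hxH hxn.le

end Padic

/-- Let `f : ℚ_p → G` be a nontrivial continuous homomorphism from the
additive group of the `p`-adic numbers to a totally disconnected locally compact group `G`
(written multiplicatively, whence the use of `Multiplicative ℚ_[p]`).  Then `f` is a proper
map, and either the kernel of `f` is a compact open subgroup of `ℚ_p`, or `f` is a
topological isomorphism onto its closed image (i.e. a closed embedding). -/
theorem stmt3 {p : ℕ} [Fact p.Prime] {G : Type*} [Group G] [TopologicalSpace G]
    [IsTopologicalGroup G] [LocallyCompactSpace G] [TotallyDisconnectedSpace G]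
    (f : Multiplicative ℚ_[p] →* G) (hf : Continuous f) (hnt : f ≠ 1) :
    IsProperMap (⇑f) ∧
      ((IsCompact {x : Multiplicative ℚ_[p] | f x = 1} ∧
          IsOpen {x : Multiplicative ℚ_[p] | f x = 1}) ∨
        IsClosedEmbedding (⇑f)) := by
  haveI : T2Space G := IsTopologicalGroup.t2Space_iff_one_closed.mpr isClosed_singleton
  -- pick a point where `f` is nontrivial
  obtain ⟨a, ha⟩ : ∃ a : Multiplicative ℚ_[p], f a ≠ 1 := by
    by_contra h
    push_neg at h
    exact hnt (MonoidHom.ext fun x ↦ by simp [h x])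
  -- find a compact open subgroup `H` of `G` not containing `f a`
  have hWnhds : ({f a}ᶜ : Set G) ∈ 𝓝 (1 : G) :=
    isOpen_compl_singleton.mem_nhds (by simpa using (Ne.symm ha))
  obtain ⟨C0, hC0, hC0mem⟩ := exists_compact_mem_nhds (1 : G)
  obtain ⟨Wo, hWo_sub, hWo_open, hWo_mem⟩ := mem_nhds_iff.mp (inter_mem hWnhds hC0mem)
  obtain ⟨Vc, hVc_clopen, hVc_one, hVc_sub⟩ :=
    (loc_compact_Haus_tot_disc_of_zero_dim (H := G)).mem_nhds_iff.mp
      (hWo_open.mem_nhds hWo_mem)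
  have hVc_cpt : IsCompact Vc :=
    hC0.of_isClosed_subset hVc_clopen.1 (fun x hx ↦ (hWo_sub (hVc_sub hx)).2)
  obtain ⟨H, Hopen, Hsub⟩ := exist_openSubgroup' hVc_cpt hVc_clopen.2 hVc_one
  have hfa_not : f a ∉ (H : Set G) := fun hmem ↦ (hWo_sub (hVc_sub (Hsub hmem))).1 rfl
  -- the preimage of `H` is a proper open, hence compact, additive subgroup of `ℚ_[p]`
  let VA : AddSubgroup ℚ_[p] :=
    { carrier := {x : ℚ_[p] | f (Multiplicative.ofAdd x) ∈ H}
      zero_mem' := by simp only [Set.mem_setOf_eq, ofAdd_zero, map_one]; exact H.one_mem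
      add_mem' := fun hx hy ↦ by
        simp only [Set.mem_setOf_eq, ofAdd_add, map_mul] at *
        exact H.mul_mem hx hy
      neg_mem' := fun hx ↦ by
        simp only [Set.mem_setOf_eq, ofAdd_neg, map_inv] at *
        exact H.inv_mem hx }
  have hVA_ne : VA ≠ ⊤ := by
    intro h
    have hmem : Multiplicative.toAdd a ∈ VA := h.symm ▸ AddSubgroup.mem_top _
    have : f (Multiplicative.ofAdd (Multiplicative.toAdd a)) ∈ H := hmem
    rw [ofAdd_toAdd] at this
    exact hfa_not this
  have hVA_open : IsOpen (VA : Set ℚ_[p]) := Hopen.preimage hf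
  have hVA_cpt : IsCompact (VA : Set ℚ_[p]) := padic_open_addSubgroup_compact hVA_open hVA_ne
  -- transfer to the multiplicative side
  have hV_cpt : IsCompact (⇑f ⁻¹' (H : Set G)) := hVA_cpt
  -- properness
  have key : ∀ C : Set G, IsCompact C → IsCompact (⇑f ⁻¹' C) := by
    intro C hC
    obtain ⟨t, ht⟩ := hC.elim_finite_subcover (fun g : G ↦ g • (H : Set G))
      (fun g ↦ Hopen.smul g)
      (fun g hg ↦ Set.mem_iUnion.mpr ⟨g, Set.mem_smul_set.mpr ⟨1, H.one_mem, mul_one g⟩⟩)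
    have hcoset : ∀ g : G, IsCompact (⇑f ⁻¹' (g • (H : Set G))) := by
      intro g
      rcases Set.eq_empty_or_nonempty (⇑f ⁻¹' (g • (H : Set G))) with h | ⟨b, hb⟩
      · rw [h]; exact isCompact_empty
      · have hb' : g⁻¹ * f b ∈ H := by
          rwa [Set.mem_preimage, Set.mem_smul_set_iff_inv_smul_mem, smul_eq_mul] at hb
        have heq : ⇑f ⁻¹' (g • (H : Set G)) = b • (⇑f ⁻¹' (H : Set G)) := by
          ext c
          rw [Set.mem_smul_set_iff_inv_smul_mem, Set.mem_preimage, Set.mem_preimage,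
            Set.mem_smul_set_iff_inv_smul_mem, smul_eq_mul, smul_eq_mul, map_mul, map_inv]
          constructor
          · intro hc
            have h1 := H.mul_mem (H.inv_mem hb') hc
            have h2 : (g⁻¹ * f b)⁻¹ * (g⁻¹ * f c) = (f b)⁻¹ * f c := by group
            rw [h2] at h1
            exact h1
          · intro hc
            have h1 := H.mul_mem hb' hc
            have h2 : g⁻¹ * f b * ((f b)⁻¹ * f c) = g⁻¹ * f c := by group
            rw [h2] at h1
            exact h1
        rw [heq]
        exact hV_cpt.smul b
    have hUnion : IsCompact (⋃ g ∈ t, ⇑f ⁻¹' (g • (H : Set G))) :=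
      t.finite_toSet.isCompact_biUnion (fun g _ ↦ hcoset g)
    refine hUnion.of_isClosed_subset (hC.isClosed.preimage hf) ?_
    intro x hx
    rcases Set.mem_iUnion₂.mp (ht hx) with ⟨g, hg, hmem⟩
    exact Set.mem_iUnion₂.mpr ⟨g, hg, hmem⟩
  have hproper : IsProperMap (⇑f) := isProperMap_iff_isCompact_preimage.mpr ⟨hf, fun K hK ↦ key K hK⟩
  refine ⟨hproper, ?_⟩
  -- the kernel
  by_cases hinj : ∀ x : Multiplicative ℚ_[p], f x = 1 → x = 1
  · exact Or.inr (IsClosedEmbedding.of_continuous_injective_isClosedMap hf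
      ((injective_iff_map_eq_one f).mpr hinj) hproper.isClosedMap)
  · push_neg at hinj
    obtain ⟨x₀, hx₀f, hx₀ne⟩ := hinj
    let KA : AddSubgroup ℚ_[p] :=
      { carrier := {x : ℚ_[p] | f (Multiplicative.ofAdd x) = 1}
        zero_mem' := by simp only [Set.mem_setOf_eq, ofAdd_zero, map_one]
        add_mem' := fun hx hy ↦ by
          simp only [Set.mem_setOf_eq, ofAdd_add, map_mul] at *
          rw [hx, hy, mul_one]
        neg_mem' := fun hx ↦ by
          simp only [Set.mem_setOf_eq, ofAdd_neg, map_inv] at *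
          rw [hx, inv_one] }
    have hKA_closed : IsClosed (KA : Set ℚ_[p]) := isClosed_singleton.preimage hf
    have hKA_cpt : IsCompact (KA : Set ℚ_[p]) :=
      hVA_cpt.of_isClosed_subset hKA_closed
        (fun x hx ↦ by
          have hx' : f (Multiplicative.ofAdd x) = 1 := hx
          show f (Multiplicative.ofAdd x) ∈ H
          rw [hx']
          exact H.one_mem)
    obtain ⟨x, hxK, hxmax⟩ :=
      hKA_cpt.exists_isMaxOn ⟨0, KA.zero_mem⟩ continuous_norm.continuousOn
    have hx0 : x ≠ 0 := by
      intro h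
      have h1 : ‖Multiplicative.toAdd x₀‖ ≤ ‖x‖ := hxmax (by
        show f (Multiplicative.ofAdd (Multiplicative.toAdd x₀)) = 1
        rwa [ofAdd_toAdd])
      rw [h, norm_zero] at h1
      have : Multiplicative.toAdd x₀ = 0 := norm_le_zero_iff.mp h1
      exact hx₀ne (by simpa using congrArg Multiplicative.ofAdd this)
    have hKeq : (KA : Set ℚ_[p]) = Metric.closedBall 0 ‖x‖ := by
      ext y
      simp only [Metric.mem_closedBall, dist_zero_right]
      exact ⟨fun hy ↦ hxmax hy, fun hy ↦ padic_mem_of_norm_le hKA_closed hxK hy⟩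
    have hKA_open : IsOpen (KA : Set ℚ_[p]) := by
      rw [hKeq]
      exact IsUltrametricDist.isOpen_closedBall _ (norm_ne_zero_iff.mpr hx0)
    exact Or.inl ⟨hKA_cpt, hKA_open⟩
end

section
/- Let B_p = ℚ_p ⋊ ℤ, where the generator of ℤ acts on ℚ_p by multiplication by p. Every continuous homomorphism f : B_p → G to a totally disconnected locally compact group G either restricts trivially to ℚ_p, or is a topological isomorphism onto its closed image (in particular f is proper). -/
open Topology Pointwise

/-- Transporting additive automorphisms to multiplicative automorphisms, as a group
homomorphism. -/
def addAutToMulAut (A : Type*) [AddGroup A] :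
    Multiplicative (AddAut A) →* MulAut (Multiplicative A) where
  toFun e := AddEquiv.toMultiplicative e.toAdd
  map_one' := by ext x; rfl
  map_mul' e₁ e₂ := by ext x; rfl

/-- `p` as a unit of `ℚ_[p]`. -/
noncomputable def pUnit (p : ℕ) [hp : Fact p.Prime] : ℚ_[p]ˣ :=
  Units.mk0 (p : ℚ_[p]) (by exact_mod_cast hp.out.ne_zero)

/-- The action of `ℤ` on `ℚ_p` where the generator acts by multiplication by `p`. -/
noncomputable def phiP (p : ℕ) [Fact p.Prime] :
    Multiplicative ℤ →* MulAut (Multiplicative ℚ_[p]) :=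
  (addAutToMulAut ℚ_[p]).comp ((AddAut.mulLeft).comp (zpowersHom ℚ_[p]ˣ (pUnit p)))

/-- The group `B_p = ℚ_p ⋊ ℤ`, with the generator of `ℤ` acting by multiplication
by `p`. -/
noncomputable def Bp (p : ℕ) [Fact p.Prime] :=
  SemidirectProduct (Multiplicative ℚ_[p]) (Multiplicative ℤ) (phiP p)

noncomputable instance (p : ℕ) [Fact p.Prime] : Group (Bp p) :=
  inferInstanceAs (Group (SemidirectProduct _ _ (phiP p)))

/-- The product topology on `B_p = ℚ_p ⋊ ℤ`, making `ℤ_p` a compact open subgroup. -/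
noncomputable instance (p : ℕ) [Fact p.Prime] : TopologicalSpace (Bp p) :=
  TopologicalSpace.induced
    (fun x : SemidirectProduct (Multiplicative ℚ_[p]) (Multiplicative ℤ) (phiP p) =>
      (x.left, x.right)) inferInstance


section Aux

variable {p : ℕ} [Fact p.Prime]

/-- A closed additive subgroup of `ℚ_p` is stable under multiplication by `ℤ_p`. -/
lemma aux_zp_smul_mem (S : AddSubgroup ℚ_[p]) (hS : IsClosed (S : Set ℚ_[p]))
    {x : ℚ_[p]} (hx : x ∈ S) (u : ℤ_[p]) : (u : ℚ_[p]) * x ∈ S := by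
  have hcont : Continuous (fun u : ℤ_[p] => (u : ℚ_[p]) * x) :=
    (continuous_subtype_val (p := fun y : ℚ_[p] => ‖y‖ ≤ 1)).mul continuous_const
  have hclosed : IsClosed {u : ℤ_[p] | (u : ℚ_[p]) * x ∈ S} := hS.preimage hcont
  have hint : ∀ n : ℤ, (n : ℤ_[p]) ∈ {u : ℤ_[p] | (u : ℚ_[p]) * x ∈ S} := by
    intro n
    have h1 : (((n : ℤ_[p]) : ℚ_[p])) * x = n • x := by
      push_cast
      rw [zsmul_eq_mul]
    simp only [Set.mem_setOf_eq, h1]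
    exact S.zsmul_mem hx n
  have hdense := PadicInt.denseRange_intCast (p := p)
  have : Set.univ ⊆ {u : ℤ_[p] | (u : ℚ_[p]) * x ∈ S} := by
    rw [← hdense.closure_eq]
    refine closure_minimal ?_ hclosed
    rintro _ ⟨n, rfl⟩
    exact hint n
  exact this (Set.mem_univ u)

/-- A closed additive subgroup of `ℚ_p` stable under division by `p` containing a nonzero
element is everything. -/
lemma aux_closed_eq_top (S : AddSubgroup ℚ_[p]) (hS : IsClosed (S : Set ℚ_[p]))
    (hstab : ∀ x ∈ S, (p : ℚ_[p])⁻¹ * x ∈ S) {x₀ : ℚ_[p]} (hx₀ : x₀ ∈ S) (hne : x₀ ≠ 0) :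
    S = ⊤ := by
  have hp0 : (p : ℚ_[p]) ≠ 0 := by
    exact_mod_cast (Fact.out : p.Prime).ne_zero
  have hpinv : ∀ n : ℕ, ((p : ℚ_[p])⁻¹) ^ n * x₀ ∈ S := by
    intro n
    induction n with
    | zero => simpa using hx₀
    | succ n ih =>
        have := hstab _ ih
        rw [pow_succ]
        convert this using 1
        ring
  rw [AddSubgroup.eq_top_iff']
  intro y
  have hp1 : (1 : ℝ) < (p : ℝ) := by exact_mod_cast (Fact.out : p.Prime).one_lt
  obtain ⟨n, hn⟩ := pow_unbounded_of_one_lt (‖y / x₀‖) hp1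
  set u : ℚ_[p] := y / x₀ * (p : ℚ_[p]) ^ n with hu
  have hunorm : ‖u‖ ≤ 1 := by
    rw [hu, norm_mul, Padic.norm_p_pow]
    calc ‖y / x₀‖ * (p : ℝ) ^ (-n : ℤ) ≤ (p : ℝ) ^ n * (p : ℝ) ^ (-n : ℤ) := by
          apply mul_le_mul_of_nonneg_right hn.le (by positivity)
      _ = 1 := by
          rw [← zpow_natCast (p : ℝ) n, ← zpow_add₀ (by positivity : (p:ℝ) ≠ 0)]
          simp
  have hmem := aux_zp_smul_mem S hS (hpinv n) ⟨u, hunorm⟩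
  have : (u : ℚ_[p]) * (((p : ℚ_[p])⁻¹) ^ n * x₀) = y := by
    rw [hu]
    field_simp
    rw [one_div, inv_pow, mul_assoc, mul_inv_cancel₀ (pow_ne_zero _ hp0), mul_one]
  rwa [this] at hmem

/-- An open additive subgroup of `ℚ_p` that is unbounded is everything. -/
lemma aux_open_unbounded_eq_top (W : AddSubgroup ℚ_[p]) (hW : IsOpen (W : Set ℚ_[p]))
    (hub : ∀ C : ℝ, ∃ w ∈ W, C < ‖w‖) : W = ⊤ := by
  have hWc : IsClosed (W : Set ℚ_[p]) := W.isClosed_of_isOpen hW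
  rw [AddSubgroup.eq_top_iff']
  intro y
  obtain ⟨w, hwW, hw⟩ := hub ‖y‖
  have hw0 : w ≠ 0 := by
    intro h
    rw [h] at hw
    simp at hw
    exact absurd hw (not_lt.2 (norm_nonneg y))
  have hnorm : ‖y / w‖ ≤ 1 := by
    rw [norm_div]
    rw [div_le_one (lt_of_le_of_lt (norm_nonneg y) hw)]
    exact hw.le
  have := aux_zp_smul_mem W hWc hwW ⟨y / w, hnorm⟩
  simpa [div_mul_cancel₀ _ hw0] using this

/-- An open additive subgroup of `ℚ_p` stable under multiplication by some `c` with
`1 < ‖c‖` is everything. -/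
lemma aux_open_scale_eq_top (W : AddSubgroup ℚ_[p]) (hW : IsOpen (W : Set ℚ_[p]))
    {c : ℚ_[p]} (hc : 1 < ‖c‖) (hstab : ∀ w ∈ W, c * w ∈ W) : W = ⊤ := by
  apply aux_open_unbounded_eq_top W hW
  -- find a small nonzero element of W
  obtain ⟨ε, hε, hball⟩ := Metric.isOpen_iff.1 hW 0 W.zero_mem
  have hp1 : (1 : ℝ) < (p : ℝ) := by exact_mod_cast (Fact.out : p.Prime).one_lt
  obtain ⟨m, hm⟩ := pow_unbounded_of_one_lt (ε⁻¹) hp1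
  have hw₀ : (p : ℚ_[p]) ^ m ∈ W := by
    apply hball
    simp only [Metric.mem_ball, dist_zero_right, Padic.norm_p_pow]
    calc (p : ℝ) ^ (-m : ℤ) = ((p:ℝ) ^ m)⁻¹ := by
          rw [zpow_neg, zpow_natCast]
      _ < ε := inv_lt_of_inv_lt₀ hε hm
  have hw₀ne : ((p : ℚ_[p]) ^ m) ≠ 0 := by
    apply pow_ne_zero
    exact_mod_cast (Fact.out : p.Prime).ne_zero
  have hiter : ∀ k : ℕ, c ^ k * (p : ℚ_[p]) ^ m ∈ W := by
    intro k
    induction k with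
    | zero => simpa using hw₀
    | succ k ih =>
        have := hstab _ ih
        rw [pow_succ]
        convert this using 1
        ring
  intro C
  have hpos : (0 : ℝ) < ‖(p : ℚ_[p]) ^ m‖ := norm_pos_iff.2 hw₀ne
  obtain ⟨k, hk⟩ := pow_unbounded_of_one_lt (C / ‖(p : ℚ_[p]) ^ m‖) hc
  refine ⟨c ^ k * (p : ℚ_[p]) ^ m, hiter k, ?_⟩
  rw [norm_mul, norm_pow]
  rw [div_lt_iff₀ hpos] at hk
  exact hk

/-- van Dantzig: a locally compact totally disconnected group has a compact open subgroup. -/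
lemma aux_vanDantzig {G : Type*} [Group G] [TopologicalSpace G] [IsTopologicalGroup G]
    [LocallyCompactSpace G] [TotallyDisconnectedSpace G] :
    ∃ U : Subgroup G, IsOpen (U : Set G) ∧ IsCompact (U : Set G) := by
  haveI : T2Space G := IsTopologicalGroup.t2Space_iff_one_closed.mpr isClosed_singleton
  obtain ⟨K, hK, hKn⟩ := exists_compact_mem_nhds (1 : G)
  obtain ⟨V, hV, h1V, hVK⟩ := (loc_compact_Haus_tot_disc_of_zero_dim).mem_nhds_iff.1 hKn
  have hVclopen : IsClopen V := hV
  have hVcomp : IsCompact V := hK.of_isClosed_subset hVclopen.1 hVK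
  obtain ⟨W₀, hW₀n, hW₀mul⟩ := compact_open_separated_mul_right hVcomp hVclopen.2 subset_rfl
  set W : Set G := interior W₀ ∩ (interior W₀)⁻¹ with hWdef
  have hWo : IsOpen W := isOpen_interior.inter isOpen_interior.inv
  have h1int : (1 : G) ∈ interior W₀ := mem_interior_iff_mem_nhds.2 hW₀n
  have h1W : (1 : G) ∈ W := ⟨h1int, by simpa using h1int⟩
  have hWsub : W ⊆ W₀ := fun x hx => interior_subset hx.1
  have hWinv : ∀ x ∈ W, x⁻¹ ∈ W := by
    rintro x ⟨hx1, hx2⟩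
    exact ⟨hx2, by simpa using hx1⟩
  set H := Subgroup.closure W with hHdef
  have key : ∀ x ∈ H, (∀ v ∈ V, v * x ∈ V) ∧ (∀ v ∈ V, v * x⁻¹ ∈ V) := by
    intro x hx
    induction hx using Subgroup.closure_induction with
    | mem x hxW =>
        refine ⟨fun v hv => hW₀mul (Set.mul_mem_mul hv (hWsub hxW)),
          fun v hv => hW₀mul (Set.mul_mem_mul hv (hWsub (hWinv x hxW)))⟩
    | one => simp
    | mul x y hxc hyc hx hy =>
        refine ⟨fun v hv => ?_, fun v hv => ?_⟩
        · rw [← mul_assoc]; exact hy.1 _ (hx.1 v hv)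
        · rw [mul_inv_rev, ← mul_assoc]; exact hx.2 _ (hy.2 v hv)
    | inv x hxc hx =>
        refine ⟨fun v hv => hx.2 v hv, fun v hv => ?_⟩
        rw [inv_inv]; exact hx.1 v hv
  have hHV : (H : Set G) ⊆ V := fun x hx => by
    have := (key x hx).1 1 h1V
    simpa using this
  have hHopen : IsOpen (H : Set G) :=
    H.isOpen_of_mem_nhds (Filter.mem_of_superset (hWo.mem_nhds h1W) Subgroup.subset_closure)
  exact ⟨H, hHopen, hVcomp.of_isClosed_subset (H.isClosed_of_isOpen hHopen) hHV⟩

/-- If a continuous homomorphism from `ℚ_p` to a t.d.l.c. group has relatively compact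
image, it is trivial. -/
lemma aux_compact_image_trivial {p : ℕ} [Fact p.Prime] {G : Type*} [Group G]
    [TopologicalSpace G] [IsTopologicalGroup G] [LocallyCompactSpace G]
    [TotallyDisconnectedSpace G] (F : Multiplicative ℚ_[p] →* G)
    (hFc : Continuous (fun x : ℚ_[p] => F (Multiplicative.ofAdd x)))
    {U : Set G} (hUcomp : IsCompact U)
    (hFU : ∀ x : ℚ_[p], F (Multiplicative.ofAdd x) ∈ U) :
    ∀ x : ℚ_[p], F (Multiplicative.ofAdd x) = 1 := by
  classical
  haveI : T2Space G := IsTopologicalGroup.t2Space_iff_one_closed.mpr isClosed_singleton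
  -- Main step: the image lies in every open subgroup whose cosets cover compacts finitely,
  -- in particular in arbitrarily small subgroups.
  have main : ∀ O' : Subgroup G, IsOpen (O' : Set G) →
      ∀ x : ℚ_[p], F (Multiplicative.ofAdd x) ∈ O' := by
    intro O' hO'open
    -- cover U by finitely many cosets of O'
    obtain ⟨t, ht⟩ := hUcomp.elim_finite_subcover (fun g : G => g • (O' : Set G))
      (fun g => hO'open.smul g)
      (fun u hu => Set.mem_iUnion.2 ⟨u, by
        rw [Set.mem_smul_set_iff_inv_smul_mem]
        simpa using O'.one_mem⟩)
    set n := t.card with hn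
    -- every element has a small positive multiple inside O'
    have step1 : ∀ x : ℚ_[p], ∃ d : ℕ, 0 < d ∧ d ≤ n ∧
        F (Multiplicative.ofAdd ((d : ℚ_[p]) * x)) ∈ O' := by
      intro x
      have hx' : ∀ j : ℕ, ∃ g ∈ t, F (Multiplicative.ofAdd ((j : ℚ_[p]) * x)) ∈
          g • (O' : Set G) := by
        intro j
        have := ht (hFU ((j : ℚ_[p]) * x))
        simpa using this
      choose gg hggt hgg using hx'
      have hcard : t.card < (Finset.range (n + 1)).card := by simp [hn]
      obtain ⟨j, hj, k, hk, hjk, hgjk⟩ :=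
        Finset.exists_ne_map_eq_of_card_lt_of_maps_to hcard (fun j _ => hggt j)
      -- wlog j < k
      rcases lt_or_gt_of_ne hjk with h | h
      case _ =>
        refine ⟨k - j, by omega, by
          simp only [Finset.mem_range] at hk hj; omega, ?_⟩
        have h1 := hgg j
        have h2 := hgg k
        rw [hgjk] at h1
        rw [Set.mem_smul_set_iff_inv_smul_mem] at h1 h2
        have h3 : (F (Multiplicative.ofAdd ((j : ℚ_[p]) * x)))⁻¹ *
            F (Multiplicative.ofAdd ((k : ℚ_[p]) * x)) ∈ O' := by
          have := O'.mul_mem (O'.inv_mem h1) h2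
          simpa [smul_eq_mul, mul_assoc] using this
        have h4 : F (Multiplicative.ofAdd (((k - j : ℕ) : ℚ_[p]) * x))
            = (F (Multiplicative.ofAdd ((j : ℚ_[p]) * x)))⁻¹ *
              F (Multiplicative.ofAdd ((k : ℚ_[p]) * x)) := by
          rw [← map_inv, ← map_mul, ← ofAdd_neg, ← ofAdd_add]
          congr 1
          push_cast [Nat.cast_sub h.le]
          ring
        rw [h4]
        exact h3
      case _ =>
        refine ⟨j - k, by omega, by
          simp only [Finset.mem_range] at hk hj; omega, ?_⟩
        have h1 := hgg j
        have h2 := hgg k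
        rw [hgjk] at h1
        rw [Set.mem_smul_set_iff_inv_smul_mem] at h1 h2
        have h3 : (F (Multiplicative.ofAdd ((k : ℚ_[p]) * x)))⁻¹ *
            F (Multiplicative.ofAdd ((j : ℚ_[p]) * x)) ∈ O' := by
          have := O'.mul_mem (O'.inv_mem h2) h1
          simpa [smul_eq_mul, mul_assoc] using this
        have h4 : F (Multiplicative.ofAdd (((j - k : ℕ) : ℚ_[p]) * x))
            = (F (Multiplicative.ofAdd ((k : ℚ_[p]) * x)))⁻¹ *
              F (Multiplicative.ofAdd ((j : ℚ_[p]) * x)) := by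
          rw [← map_inv, ← map_mul, ← ofAdd_neg, ← ofAdd_add]
          congr 1
          push_cast [Nat.cast_sub h.le]
          ring
        rw [h4]
        exact h3
    -- upgrade to the factorial multiple, uniformly
    have step2 : ∀ x : ℚ_[p], F (Multiplicative.ofAdd (((n.factorial : ℕ) : ℚ_[p]) * x)) ∈ O' := by
      intro x
      obtain ⟨d, hd0, hdn, hdmem⟩ := step1 x
      have hdvd : d ∣ n.factorial := Nat.dvd_factorial hd0 hdn
      obtain ⟨m, hm⟩ := hdvd
      have : ((n.factorial : ℕ) : ℚ_[p]) * x = m • ((d : ℚ_[p]) * x) := by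
        rw [nsmul_eq_mul, hm]
        push_cast
        ring
      rw [this, ofAdd_nsmul, map_pow]
      exact O'.pow_mem hdmem m
    intro x
    have hfac0 : ((n.factorial : ℕ) : ℚ_[p]) ≠ 0 := by
      exact_mod_cast Nat.factorial_ne_zero n
    have := step2 (x / (n.factorial : ℚ_[p]))
    rwa [mul_div_cancel₀ _ hfac0] at this
  -- now conclude: F x lies in arbitrarily small subgroups
  intro x
  by_contra hne
  have h1ne : (1 : G) ∈ ({F (Multiplicative.ofAdd x)}ᶜ : Set G) := by
    simpa using (Ne.symm hne)
  obtain ⟨C, hC, h1C, hCsub⟩ := (loc_compact_Haus_tot_disc_of_zero_dim).mem_nhds_iff.1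
    (isOpen_compl_singleton.mem_nhds h1ne)
  obtain ⟨U', hU'open, hU'comp⟩ := aux_vanDantzig (G := G)
  haveI : CompactSpace ↥U' := isCompact_iff_compactSpace.1 hU'comp
  set C' : Set ↥U' := (Subtype.val) ⁻¹' C with hC'def
  have hC' : IsClopen C' :=
    ⟨hC.1.preimage continuous_subtype_val, hC.2.preimage continuous_subtype_val⟩
  obtain ⟨O, hO⟩ := IsTopologicalGroup.exist_openSubgroup_sub_clopen_nhds_of_one hC'
    (by simpa [hC'def] using h1C)
  set O' : Subgroup G := O.toSubgroup.map U'.subtype with hO'def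
  have hO'open : IsOpen (O' : Set G) := by
    have he : (O' : Set G) = Subtype.val '' (O : Set ↥U') := by
      ext g
      simp [hO'def, Subgroup.mem_map, Set.mem_image]
    rw [he]
    exact hU'open.isOpenMap_subtype_val _ O.isOpen
  have hmem := main O' hO'open x
  have : F (Multiplicative.ofAdd x) ∈ C := by
    obtain ⟨y, hyO, hy⟩ := hmem
    have := hO hyO
    rw [← hy]
    exact this
  exact hCsub this rfl


lemma phiP_apply (k : ℤ) (w : ℚ_[p]) :
    phiP p (Multiplicative.ofAdd k) (Multiplicative.ofAdd w)
      = Multiplicative.ofAdd ((p : ℚ_[p]) ^ k * w) := by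
  simp [phiP, addAutToMulAut, pUnit, AddAut.mulLeft, zpowersHom_apply, Units.smul_def]
  change (Units.mk0 (p : ℚ_[p]) _ ^ k) • w = _
  rw [Units.smul_def, Units.val_zpow_eq_zpow_val, Units.val_mk0]
  rfl

noncomputable def inlQ : Multiplicative ℚ_[p] →* Bp p := SemidirectProduct.inl

noncomputable def inrZ : Multiplicative ℤ →* Bp p := SemidirectProduct.inr

noncomputable def rightB : Bp p →* Multiplicative ℤ := SemidirectProduct.rightHom

def leftB (g : Bp p) : Multiplicative ℚ_[p] := SemidirectProduct.left g

lemma sdp_conj {N H : Type*} [Group N] [Group H] {φ : H →* MulAut N}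
    (hN : ∀ a b : N, a * b = b * a) (g : N ⋊[φ] H) (n : N) :
    g * SemidirectProduct.inl n * g⁻¹ = SemidirectProduct.inl (φ g.right n) := by
  ext
  · simp only [SemidirectProduct.mul_left, SemidirectProduct.inv_left,
      SemidirectProduct.mul_right, SemidirectProduct.left_inl, SemidirectProduct.right_inl,
      SemidirectProduct.inv_right, mul_one]
    have h1 : (φ g.right) ((φ g.right⁻¹) g.left⁻¹) = g.left⁻¹ := by
      rw [map_inv φ]
      simp
    rw [h1, hN g.left _]
    simp [mul_assoc]
  · simp [SemidirectProduct.mul_right, SemidirectProduct.inv_right]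

lemma conj_inl (g : Bp p) (w : ℚ_[p]) :
    g * inlQ (Multiplicative.ofAdd w) * g⁻¹
      = inlQ (Multiplicative.ofAdd
          ((p : ℚ_[p]) ^ (Multiplicative.toAdd (rightB g)) * w)) := by
  have h := sdp_conj (φ := phiP p) (fun a b => mul_comm a b)
    g (Multiplicative.ofAdd w)
  rw [show (Multiplicative.ofAdd ((p : ℚ_[p]) ^ (Multiplicative.toAdd (rightB g)) * w))
      = phiP p (SemidirectProduct.right (N := Multiplicative ℚ_[p]) g)
          (Multiplicative.ofAdd w) from ?_]
  · exact h
  · rw [show (SemidirectProduct.right (N := Multiplicative ℚ_[p]) g : Multiplicative ℤ)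
        = Multiplicative.ofAdd (Multiplicative.toAdd (rightB g)) from rfl]
    rw [phiP_apply]

lemma continuous_inlQ : Continuous (fun x : ℚ_[p] => inlQ (Multiplicative.ofAdd x)) := by
  apply continuous_induced_rng.2
  exact Continuous.prodMk continuous_id continuous_const

lemma continuous_pairB : Continuous (fun g : Bp p =>
    ((SemidirectProduct.left g, SemidirectProduct.right g) :
      Multiplicative ℚ_[p] × Multiplicative ℤ)) := continuous_induced_dom

lemma continuous_leftB : Continuous (fun g : Bp p => leftB g) :=
  continuous_fst.comp continuous_pairB

lemma continuous_rightB : Continuous (fun g : Bp p => rightB g) :=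
  continuous_snd.comp continuous_pairB

lemma continuous_mulLeft (z : Bp p) : Continuous (fun b : Bp p => z * b) := by
  apply continuous_induced_rng.2
  have hleft : Continuous fun b : Bp p => leftB (z * b) := by
    have he : (fun b : Bp p => leftB (z * b)) = fun b =>
        Multiplicative.ofAdd (Multiplicative.toAdd (leftB z)
          + (p : ℚ_[p]) ^ (Multiplicative.toAdd (rightB z)) * Multiplicative.toAdd (leftB b)) := by
      funext b
      show SemidirectProduct.left (z * b) = _
      rw [show SemidirectProduct.left (z * b) = SemidirectProduct.left z *
          phiP p (SemidirectProduct.right z) (SemidirectProduct.left b) from rfl]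
      have h2 : (phiP p (SemidirectProduct.right (N := Multiplicative ℚ_[p]) z))
          (SemidirectProduct.left b)
          = Multiplicative.ofAdd ((p : ℚ_[p]) ^ (Multiplicative.toAdd (rightB z))
              * Multiplicative.toAdd (leftB b)) := by
        have := phiP_apply (p := p) (Multiplicative.toAdd (rightB z))
          (Multiplicative.toAdd (leftB b))
        exact this
      rw [h2]
      refine Multiplicative.toAdd.injective ?_
      simp
      rfl
    rw [he]
    exact continuous_ofAdd.comp (continuous_const.add (continuous_const.mul
      (continuous_toAdd.comp continuous_leftB)))
  have hright : Continuous fun b : Bp p => rightB (z * b) := by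
    have he : (fun b : Bp p => rightB (z * b)) = fun b => rightB z * rightB b := by
      funext b; exact map_mul rightB z b
    rw [he]
    exact continuous_const.mul continuous_rightB
  exact Continuous.prodMk hleft hright

lemma inl_leftB (g : Bp p) (h : rightB g = 1) : inlQ (leftB g) = g := by
  calc inlQ (leftB g) = inlQ (leftB g) * inrZ (rightB g) := by rw [h, map_one]; exact (mul_one _).symm
    _ = g := SemidirectProduct.inl_left_mul_inr_right g

lemma decompB (g : Bp p) : inlQ (leftB g) * inrZ (rightB g) = g :=
  SemidirectProduct.inl_left_mul_inr_right g

lemma rightB_inrZ (t : Multiplicative ℤ) : rightB (inrZ (p := p) t) = t :=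
  SemidirectProduct.rightHom_inr t

end Aux

/-- Let `B_p = ℚ_p ⋊ ℤ`, where the generator of `ℤ` acts on `ℚ_p` by
multiplication by `p`.  Every continuous homomorphism `f : B_p → G` to a totally
disconnected locally compact group `G` either restricts trivially to `ℚ_p`, or is a
topological isomorphism onto its closed image (in particular `f` is proper). -/
theorem stmt5 {p : ℕ} [Fact p.Prime] {G : Type*} [Group G] [TopologicalSpace G]
    [IsTopologicalGroup G] [LocallyCompactSpace G] [TotallyDisconnectedSpace G]
    (f : Bp p →* G) (hf : Continuous f) :
    (∀ x : Multiplicative ℚ_[p], f (SemidirectProduct.inl x) = 1) ∨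
      (IsClosedEmbedding (⇑f) ∧ IsProperMap (⇑f)) := by
  classical
  haveI : T2Space G := IsTopologicalGroup.t2Space_iff_one_closed.mpr isClosed_singleton
  set F : Multiplicative ℚ_[p] →* G := f.comp inlQ with hFdef
  have hFc : Continuous (fun x : ℚ_[p] => F (Multiplicative.ofAdd x)) :=
    hf.comp continuous_inlQ
  by_cases htriv : ∀ x : ℚ_[p], F (Multiplicative.ofAdd x) = 1
  · left
    intro x
    exact htriv (Multiplicative.toAdd x)
  right
  push_neg at htriv
  obtain ⟨x₀, hx₀⟩ := htriv
  -- the conjugation identity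
  have hconj : ∀ (g : Bp p) (w : ℚ_[p]),
      F (Multiplicative.ofAdd ((p : ℚ_[p]) ^ (Multiplicative.toAdd (rightB g)) * w))
        = f g * F (Multiplicative.ofAdd w) * (f g)⁻¹ := by
    intro g w
    have h := congrArg f (conj_inl g w)
    simp only [map_mul, map_inv] at h
    exact h.symm
  -- the kernel of F on `ℚ_p`
  set H : AddSubgroup ℚ_[p] :=
    { carrier := {x : ℚ_[p] | F (Multiplicative.ofAdd x) = 1}
      zero_mem' := by simp only [Set.mem_setOf_eq, ofAdd_zero, map_one]
      add_mem' := by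
        intro a b ha hb
        simp only [Set.mem_setOf_eq, ofAdd_add, map_mul] at *
        rw [ha, hb, mul_one]
      neg_mem' := by
        intro a ha
        simp only [Set.mem_setOf_eq, ofAdd_neg, map_inv] at *
        rw [ha, inv_one] } with hHdef
  have hHmem : ∀ x : ℚ_[p], x ∈ H ↔ F (Multiplicative.ofAdd x) = 1 := fun x => Iff.rfl
  have hHclosed : IsClosed (H : Set ℚ_[p]) := by
    have : (H : Set ℚ_[p]) = (fun x : ℚ_[p] => F (Multiplicative.ofAdd x)) ⁻¹' {1} := rfl
    rw [this]
    exact isClosed_singleton.preimage hFc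
  have hHstab : ∀ x ∈ H, (p : ℚ_[p])⁻¹ * x ∈ H := by
    intro x hx
    have h := hconj (inrZ (Multiplicative.ofAdd (-1 : ℤ))) x
    rw [rightB_inrZ] at h
    simp only [toAdd_ofAdd, zpow_neg, zpow_one] at h
    rw [hHmem] at hx ⊢
    rw [h, hx, mul_one, mul_inv_cancel]
  have hker : ∀ x : ℚ_[p], F (Multiplicative.ofAdd x) = 1 → x = 0 := by
    intro x hx
    by_contra hne
    have htop : H = ⊤ := aux_closed_eq_top H hHclosed hHstab hx hne
    exact hx₀ ((hHmem x₀).1 (htop ▸ AddSubgroup.mem_top x₀))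
  -- injectivity of f
  have hinj : Function.Injective f := by
    rw [injective_iff_map_eq_one]
    intro g hg
    set n : ℤ := Multiplicative.toAdd (rightB g) with hn
    have hfg1 : ∀ y : ℚ_[p], F (Multiplicative.ofAdd (((p : ℚ_[p]) ^ n - 1) * y)) = 1 := by
      intro y
      have h1 := hconj g y
      rw [hg] at h1
      simp only [one_mul, inv_one, mul_one] at h1
      have h2 : F (Multiplicative.ofAdd (((p : ℚ_[p]) ^ n - 1) * y))
          = F (Multiplicative.ofAdd ((p : ℚ_[p]) ^ n * y)) *
            (F (Multiplicative.ofAdd y))⁻¹ := by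
        rw [← map_inv, ← map_mul, ← ofAdd_neg, ← ofAdd_add]
        congr 1
        ring_nf
      rw [h2, h1, mul_inv_cancel]
    have hpn : (p : ℚ_[p]) ^ n = 1 := by
      have := hker _ (hfg1 1)
      have h3 : (p : ℚ_[p]) ^ n - 1 = 0 := by simpa using this
      exact sub_eq_zero.1 h3
    have hn0 : n = 0 := by
      have hnorm := congrArg norm hpn
      rw [Padic.norm_p_zpow, norm_one] at hnorm
      have hp1 : (1 : ℝ) < (p : ℝ) := by exact_mod_cast (Fact.out : p.Prime).one_lt
      have := zpow_right_injective₀ (by positivity : (0:ℝ) < (p:ℝ)) (ne_of_gt hp1)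
        (a₂ := (0 : ℤ)) (by simpa using hnorm)
      omega
    have hright1 : rightB g = 1 := by
      have : rightB g = Multiplicative.ofAdd n := rfl
      rw [this, hn0, ofAdd_zero]
    have hgl : inlQ (leftB g) = g := inl_leftB g hright1
    have hFl : F (leftB g) = 1 := by
      rw [hFdef]
      show f (inlQ (leftB g)) = 1
      rw [hgl, hg]
    have hl0 : Multiplicative.toAdd (leftB g) = 0 := by
      apply hker
      simpa using hFl
    have : leftB g = 1 := by
      have h := congrArg Multiplicative.ofAdd hl0
      simpa using h
    rw [← hgl, this, map_one]
  -- van Dantzig subgroup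
  obtain ⟨U, hUopen, hUcomp⟩ := aux_vanDantzig (G := G)
  set W : AddSubgroup ℚ_[p] :=
    { carrier := {x : ℚ_[p] | F (Multiplicative.ofAdd x) ∈ U}
      zero_mem' := by simp only [Set.mem_setOf_eq, ofAdd_zero, map_one]; exact U.one_mem
      add_mem' := by
        intro a b ha hb
        simp only [Set.mem_setOf_eq, ofAdd_add, map_mul] at *
        exact U.mul_mem ha hb
      neg_mem' := by
        intro a ha
        simp only [Set.mem_setOf_eq, ofAdd_neg, map_inv] at *
        exact U.inv_mem ha } with hWdef
  have hWmem : ∀ x : ℚ_[p], x ∈ W ↔ F (Multiplicative.ofAdd x) ∈ U := fun x => Iff.rfl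
  have hWopen : IsOpen (W : Set ℚ_[p]) := by
    have : (W : Set ℚ_[p]) = (fun x : ℚ_[p] => F (Multiplicative.ofAdd x)) ⁻¹' U := rfl
    rw [this]
    exact hUopen.preimage hFc
  have hWne : W ≠ ⊤ := by
    intro htop
    refine hx₀ (aux_compact_image_trivial F hFc hUcomp (fun x => ?_) x₀)
    exact (hWmem x).1 (htop ▸ AddSubgroup.mem_top x)
  -- elements of `f ⁻¹ U` have trivial right component
  have hright0 : ∀ g : Bp p, f g ∈ U → rightB g = 1 := by
    intro g hg
    by_contra hne
    set m : ℤ := Multiplicative.toAdd (rightB g) with hm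
    have hm0 : m ≠ 0 := by
      intro h
      apply hne
      have : rightB g = Multiplicative.ofAdd m := rfl
      rw [this, h, ofAdd_zero]
    have hstab : ∀ (g' : Bp p), f g' ∈ U →
        ∀ w ∈ W, (p : ℚ_[p]) ^ (Multiplicative.toAdd (rightB g')) * w ∈ W := by
      intro g' hg' w hw
      rw [hWmem] at hw ⊢
      rw [hconj g' w]
      exact U.mul_mem (U.mul_mem hg' hw) (U.inv_mem hg')
    have h1 : ∀ w ∈ W, (p : ℚ_[p]) ^ m * w ∈ W := hstab g hg
    have h2 : ∀ w ∈ W, (p : ℚ_[p]) ^ (-m) * w ∈ W := by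
      have hginv : f g⁻¹ ∈ U := by rw [map_inv]; exact U.inv_mem hg
      have := hstab g⁻¹ hginv
      have hr : Multiplicative.toAdd (rightB g⁻¹) = -m := by
        rw [map_inv]
        simp [hm]
      rwa [hr] at this
    have hp1 : (1 : ℝ) < (p : ℝ) := by exact_mod_cast (Fact.out : p.Prime).one_lt
    have habs : W = ⊤ := by
      rcases lt_or_gt_of_ne hm0 with hlt | hgt
      · refine aux_open_scale_eq_top W hWopen (c := (p : ℚ_[p]) ^ m) ?_ h1
        rw [Padic.norm_p_zpow]
        apply one_lt_zpow₀ hp1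
        omega
      · refine aux_open_scale_eq_top W hWopen (c := (p : ℚ_[p]) ^ (-m)) ?_ h2
        rw [Padic.norm_p_zpow]
        apply one_lt_zpow₀ hp1
        omega
    exact hWne habs
  -- W is bounded, hence compact
  have hWbdd : ∃ R : ℝ, ∀ w ∈ W, ‖w‖ ≤ R := by
    by_contra hcon
    push_neg at hcon
    refine hWne (aux_open_unbounded_eq_top W hWopen fun C => ?_)
    obtain ⟨w, hwW, hw⟩ := hcon C
    exact ⟨w, hwW, hw⟩
  obtain ⟨R, hR⟩ := hWbdd
  have hWcomp : IsCompact (W : Set ℚ_[p]) := by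
    refine (isCompact_closedBall (0 : ℚ_[p]) R).of_isClosed_subset
      (W.isClosed_of_isOpen hWopen) ?_
    intro w hw
    simpa [Metric.mem_closedBall, dist_zero_right] using hR w hw
  -- the preimage of U is the image of W
  have hVeq : (⇑f) ⁻¹' U = (fun x : ℚ_[p] => inlQ (Multiplicative.ofAdd x)) '' (W : Set ℚ_[p]) := by
    ext g
    constructor
    · intro hg
      have h1 : rightB g = 1 := hright0 g hg
      have hgl : inlQ (leftB g) = g := inl_leftB g h1
      refine ⟨Multiplicative.toAdd (leftB g), ?_, ?_⟩
      · show F (Multiplicative.ofAdd (Multiplicative.toAdd (leftB g))) ∈ U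
        have : F (leftB g) ∈ U := by
          show f (inlQ (leftB g)) ∈ U
          rw [hgl]
          exact hg
        simpa using this
      · simpa using hgl
    · rintro ⟨x, hxW, rfl⟩
      exact (hWmem x).1 hxW
  have hVcomp : IsCompact ((⇑f) ⁻¹' U) := by
    rw [hVeq]
    exact hWcomp.image continuous_inlQ
  -- properness
  have hproper : IsProperMap (⇑f) := by
    rw [isProperMap_iff_isCompact_preimage]
    refine ⟨hf, fun K hK => ?_⟩
    obtain ⟨t, ht⟩ := hK.elim_finite_subcover (fun g : G => g • (U : Set G))
      (fun g => hUopen.smul g)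
      (fun k hk => Set.mem_iUnion.2 ⟨k, by
        rw [Set.mem_smul_set_iff_inv_smul_mem]
        simpa using U.one_mem⟩)
    have hcover : ∀ g : G, ∃ Cg : Set (Bp p), IsCompact Cg ∧
        (⇑f) ⁻¹' (g • (U : Set G)) ⊆ Cg := by
      intro g
      by_cases hne2 : ((⇑f) ⁻¹' (g • (U : Set G))).Nonempty
      · obtain ⟨z, hz⟩ := hne2
        refine ⟨(fun b : Bp p => z * b) '' ((⇑f) ⁻¹' U),
          hVcomp.image (continuous_mulLeft z), ?_⟩
        intro y hy
        refine ⟨z⁻¹ * y, ?_, by show z * (z⁻¹ * y) = y; rw [mul_inv_cancel_left]⟩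
        show f (z⁻¹ * y) ∈ U
        rw [Set.mem_preimage, Set.mem_smul_set_iff_inv_smul_mem, smul_eq_mul] at hz hy
        rw [map_mul, map_inv]
        have heq : (f z)⁻¹ * f y = (g⁻¹ * f z)⁻¹ * (g⁻¹ * f y) := by group
        rw [heq]
        exact U.mul_mem (U.inv_mem hz) hy
      · exact ⟨∅, isCompact_empty, by
          rw [Set.not_nonempty_iff_eq_empty.1 hne2]⟩
    choose Cg hCgcomp hCgsub using hcover
    have hsub : (⇑f) ⁻¹' K ⊆ ⋃ g ∈ t, Cg g := by
      intro y hy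
      have := ht hy
      rw [Set.mem_iUnion₂] at this ⊢
      obtain ⟨g, hgt, hgy⟩ := this
      exact ⟨g, hgt, hCgsub g hgy⟩
    exact IsCompact.of_isClosed_subset
      (t.finite_toSet.isCompact_biUnion (fun g _ => hCgcomp g))
      (hK.isClosed.preimage hf) hsub
  exact ⟨IsClosedEmbedding.of_continuous_injective_isClosedMap hf hinj hproper.isClosedMap,
    hproper⟩
end

section
/- Let Z = ⊕_ℕ ℤ be embedded as a central subgroup of a finitely generated group Γ, let A be a topological abelian group, and let f : Z → A be a homomorphism whose image has cocompact closure in A. Then the graph F = {(z, f(z)) : z ∈ Z} is a central subgroup of Γ × A (with Γ discrete), the quotient map Γ × A → (Γ × A)/F restricts to an injective open map on {1} × A, and (Γ × A)/F is compactly generated whenever A is locally compact. -/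
open Set Pointwise

/-- If `G` is locally compact and `G ⧸ H` is compact, there is a compact set of `G`
surjecting onto the quotient. -/
lemma exists_compact_image_eq_univ {G : Type*} [Group G] [TopologicalSpace G]
    [IsTopologicalGroup G] [LocallyCompactSpace G] (H : Subgroup G)
    (hc : CompactSpace (G ⧸ H)) :
    ∃ K : Set G, IsCompact K ∧ QuotientGroup.mk '' K = (Set.univ : Set (G ⧸ H)) := by
  have hcover : ∀ y : G ⧸ H, ∃ K : Set G, IsCompact K ∧ y ∈ QuotientGroup.mk '' (interior K) := by
    intro y
    obtain ⟨g, rfl⟩ := Quot.exists_rep y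
    obtain ⟨K, hK, hKn⟩ := exists_compact_mem_nhds g
    exact ⟨K, hK, ⟨g, mem_interior_iff_mem_nhds.2 hKn, rfl⟩⟩
  choose K hKc hKy using hcover
  obtain ⟨t, ht⟩ := isCompact_univ.elim_finite_subcover
    (fun y : G ⧸ H => QuotientGroup.mk '' interior (K y))
    (fun y => QuotientGroup.isOpenMap_coe _ isOpen_interior)
    (fun y _ => Set.mem_iUnion.2 ⟨y, hKy y⟩)
  refine ⟨⋃ y ∈ t, K y, t.isCompact_biUnion (fun y _ => hKc y), ?_⟩
  apply Set.eq_univ_of_univ_subset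
  intro z hz
  obtain ⟨y, hyt, g, hg, rfl⟩ := by simpa using ht hz
  exact ⟨g, Set.mem_biUnion hyt (interior_subset hg), rfl⟩

/-- Let `Z = ⊕_ℕ ℤ` be embedded as a central subgroup of a finitely
generated group `Γ` via `ι`, let `A` be a topological abelian group, and let `f : Z → A`
be a homomorphism whose image has cocompact closure in `A`.  Then the graph
`F = {(ι z, f z)}` is a central subgroup of `Γ × A` (with `Γ` discrete), the quotient map
`Γ × A → (Γ × A)/F` restricts to an injective open map on `{1} × A`, and `(Γ × A)/F` is
compactly generated whenever `A` is locally compact. -/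
theorem stmt7 {Γ A : Type*} [Group Γ] [TopologicalSpace Γ] [DiscreteTopology Γ]
    [CommGroup A] [TopologicalSpace A] [IsTopologicalGroup A]
    (hΓfg : Group.FG Γ)
    (ι : Multiplicative (ℕ →₀ ℤ) →* Γ) (hι : Function.Injective ι)
    (hcent : ι.range ≤ Subgroup.center Γ)
    (f : Multiplicative (ℕ →₀ ℤ) →* A)
    (hcoc : CompactSpace (A ⧸ f.range.topologicalClosure)) :
    (ι.prod f).range ≤ Subgroup.center (Γ × A) ∧
    Function.Injective
      (fun a : A => (QuotientGroup.mk ((1 : Γ), a) : (Γ × A) ⧸ (ι.prod f).range)) ∧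
    IsOpenMap
      (fun a : A => (QuotientGroup.mk ((1 : Γ), a) : (Γ × A) ⧸ (ι.prod f).range)) ∧
    (LocallyCompactSpace A → ∀ [inst : (ι.prod f).range.Normal],
      ∃ C : Set ((Γ × A) ⧸ (ι.prod f).range), IsCompact C ∧ Subgroup.closure C = ⊤) := by
  haveI : IsTopologicalGroup Γ :=
    { continuous_mul := continuous_of_discreteTopology
      continuous_inv := continuous_of_discreteTopology }
  refine ⟨?_, ?_, ?_, ?_⟩
  · -- centrality
    rintro x ⟨z, rfl⟩
    rw [Subgroup.mem_center_iff]
    rintro ⟨g, b⟩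
    have h1 : ι z ∈ Subgroup.center Γ := hcent ⟨z, rfl⟩
    rw [Subgroup.mem_center_iff] at h1
    exact Prod.ext (h1 g) (mul_comm b (f z))
  · -- injectivity
    intro a b h
    rw [QuotientGroup.eq] at h
    obtain ⟨z, hz⟩ := h
    have hz' : (ι z, f z) = ((1 : Γ), a⁻¹ * b) := by
      simpa [MonoidHom.prod_apply, Prod.ext_iff] using hz
    rw [Prod.mk.injEq] at hz'
    have : z = 1 := hι (by rw [hz'.1, map_one])
    have hz2 : (1 : A) = a⁻¹ * b := by rw [← hz'.2, this, map_one]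
    exact inv_mul_eq_one.1 hz2.symm
  · -- openness
    have h1 : IsOpenMap (fun a : A => ((1 : Γ), a)) := by
      intro U hU
      have : (fun a : A => ((1 : Γ), a)) '' U = {(1 : Γ)} ×ˢ U := by
        ext ⟨g, a⟩
        simp [eq_comm, and_comm]
      rw [this]
      exact (isOpen_discrete _).prod hU
    exact IsOpenMap.comp QuotientGroup.isOpenMap_coe h1
  · -- compact generation
    intro hlc inst
    obtain ⟨K, hKc, hKu⟩ := exists_compact_image_eq_univ f.range.topologicalClosure hcoc
    obtain ⟨U, hUc, hUn⟩ := exists_compact_mem_nhds (1 : A)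
    obtain ⟨S, hS⟩ := hΓfg.out
    set φ : Γ →* (Γ × A) ⧸ (ι.prod f).range :=
      (QuotientGroup.mk' _).comp (MonoidHom.inl Γ A) with hφ
    set C : Set ((Γ × A) ⧸ (ι.prod f).range) :=
      (φ '' (S : Set Γ)) ∪ ((fun a : A => (QuotientGroup.mk ((1 : Γ), a))) '' (K * U)) with hC
    have hCc : IsCompact C := by
      refine ((S : Set Γ).toFinite.image φ).isCompact.union ?_
      exact ((hKc.mul hUc).image
        (QuotientGroup.continuous_mk.comp (continuous_const.prodMk continuous_id)))
    refine ⟨C, hCc, ?_⟩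
    -- images of Γ lie in the closure of C
    have hΓ : ∀ γ : Γ, φ γ ∈ Subgroup.closure C := by
      intro γ
      have : φ γ ∈ Subgroup.map φ (Subgroup.closure (S : Set Γ)) := by
        rw [hS]; exact ⟨γ, trivial, rfl⟩
      rw [MonoidHom.map_closure] at this
      exact Subgroup.closure_mono (Set.subset_union_left) this
    -- images of `f.range` lie in the closure of C
    have hf : ∀ z, (QuotientGroup.mk ((1 : Γ), f z) : (Γ × A) ⧸ (ι.prod f).range)
        ∈ Subgroup.closure C := by
      intro z
      have key : (QuotientGroup.mk ((1 : Γ), f z) : (Γ × A) ⧸ (ι.prod f).range)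
          = QuotientGroup.mk (((ι z)⁻¹, (1 : A))) := by
        rw [QuotientGroup.eq]
        exact ⟨z⁻¹, by simp [MonoidHom.prod_apply]⟩
      rw [key]
      exact hΓ ((ι z)⁻¹)
    rw [eq_top_iff]
    rintro x -
    obtain ⟨⟨γ, a⟩, rfl⟩ := QuotientGroup.mk_surjective x
    have hsplit : (QuotientGroup.mk (γ, a) : (Γ × A) ⧸ (ι.prod f).range)
        = φ γ * QuotientGroup.mk ((1 : Γ), a) := by
      show _ = (QuotientGroup.mk ((γ, (1 : A))) : (Γ × A) ⧸ (ι.prod f).range)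
        * QuotientGroup.mk ((1 : Γ), a)
      rw [← QuotientGroup.mk_mul]
      congr 1
      simp
    rw [hsplit]
    refine mul_mem (hΓ γ) ?_
    -- decompose a
    have ha : (QuotientGroup.mk a : A ⧸ f.range.topologicalClosure)
        ∈ QuotientGroup.mk '' K := by rw [hKu]; trivial
    obtain ⟨k, hk, hka⟩ := ha
    rw [QuotientGroup.eq] at hka
    have hh : k⁻¹ * a ∈ f.range.topologicalClosure := hka
    -- find d ∈ range f close to k⁻¹ * a
    have hmem : (k⁻¹ * a) ∈ closure (f.range : Set A) := hh
    have hopen : {x : A | (k⁻¹ * a) * x⁻¹ ∈ interior U} ∈ nhds (k⁻¹ * a) := by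
      have hcont : Continuous (fun x : A => (k⁻¹ * a) * x⁻¹) :=
        continuous_const.mul continuous_inv
      have : (k⁻¹ * a) * (k⁻¹ * a)⁻¹ ∈ interior U := by
        rw [mul_inv_cancel]
        exact mem_interior_iff_mem_nhds.2 hUn
      exact hcont.continuousAt.preimage_mem_nhds (isOpen_interior.mem_nhds this)
    obtain ⟨d, hd1, hd2⟩ := mem_closure_iff_nhds.1 hmem _ hopen
    obtain ⟨z, rfl⟩ := hd2
    -- a = (k * ((k⁻¹*a) * (f z)⁻¹)) * f z
    have hdecomp : a = (k * ((k⁻¹ * a) * (f z)⁻¹)) * f z := by group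
    have hKU : k * ((k⁻¹ * a) * (f z)⁻¹) ∈ K * U :=
      Set.mul_mem_mul hk (interior_subset hd1)
    have : (QuotientGroup.mk ((1 : Γ), a) : (Γ × A) ⧸ (ι.prod f).range)
        = QuotientGroup.mk ((1 : Γ), k * ((k⁻¹ * a) * (f z)⁻¹))
          * QuotientGroup.mk ((1 : Γ), f z) := by
      rw [← QuotientGroup.mk_mul]
      congr 1
      exact Prod.ext (by simp) hdecomp
    rw [this]
    exact mul_mem (Subgroup.subset_closure (Set.mem_union_right _ ⟨_, hKU, rfl⟩)) (hf z)
end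

section
/- Let Λ be an infinitely generated (i.e. not finitely generated) subgroup of ℤ_p^×, let H = ℤ_p ⋊ Λ with Λ discrete acting by multiplication, and suppose H is an open subgroup of a locally compact group G. Then G has a discrete abelian quotient containing a copy of Λ, hence an infinitely generated discrete abelian quotient; in particular G is not compactly generated. -/
open Topology

/-- The action of a group `Λ` of `p`-adic units on the additive group `ℤ_p` by
multiplication. -/
noncomputable def unitsAction (p : ℕ) [Fact p.Prime] {Λ : Type*} [Group Λ]
    (ρ : Λ →* ℤ_[p]ˣ) : Λ →* MulAut (Multiplicative ℤ_[p]) :=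
  (addAutToMulAut ℤ_[p]).comp (AddAut.mulLeft.comp ρ)

/-- The product topology on a semidirect product; for `ℤ_p ⋊ Λ` with `Λ` discrete this
makes `ℤ_p` a compact open subgroup. -/
instance semidirectProductTopology (N G : Type*) [Group N] [Group G] (φ : G →* MulAut N)
    [TopologicalSpace N] [TopologicalSpace G] : TopologicalSpace (N ⋊[φ] G) :=
  TopologicalSpace.induced (fun w : N ⋊[φ] G => (w.left, w.right)) inferInstance

/-- An element of `ℤ_p` divisible by all powers of `p` is zero. -/
lemma stmt18_eq_zero_of_forall_pow_dvd (p : ℕ) [hp : Fact p.Prime] (z : ℤ_[p])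
    (h : ∀ m : ℕ, (p : ℤ_[p]) ^ m ∣ z) : z = 0 := by
  by_contra hz
  have hp1 : (1 : ℝ) < p := by exact_mod_cast hp.out.one_lt
  obtain ⟨m, hm⟩ := exists_pow_lt_of_lt_one (norm_pos_iff.mpr hz)
    (by rw [inv_lt_one_iff₀]; right; exact hp1)
  have h2 : ‖z‖ ≤ (p : ℝ) ^ (-(m : ℤ)) :=
    (PadicInt.norm_le_pow_iff_mem_span_pow z m).mpr (Ideal.mem_span_singleton.mpr (h m))
  have h3 : (p : ℝ) ^ (-(m : ℤ)) = ((p : ℝ)⁻¹) ^ m := by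
    rw [inv_pow, ← zpow_natCast, ← zpow_neg]
  rw [h3] at h2
  linarith

/-- Every additive endomorphism of `ℤ_p` is `ℤ_p`-linear. -/
lemma stmt18_linear (p : ℕ) [hp : Fact p.Prime] (F : ℤ_[p] →+ ℤ_[p]) (c x : ℤ_[p]) :
    F (c * x) = c * F x := by
  have hdvd : ∀ m : ℕ, (p : ℤ_[p]) ^ m ∣ F (c * x) - c * F x := by
    intro m
    obtain ⟨d, hd⟩ := Ideal.mem_span_singleton.mp (PadicInt.appr_spec m c)
    have harg : c * x = (PadicInt.appr c m : ℤ_[p]) * x + ((p ^ m : ℕ) : ℤ_[p]) * (d * x) := by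
      push_cast
      linear_combination x * hd
    have h1 : F (c * x) = (PadicInt.appr c m) • F x + (p ^ m) • F (d * x) := by
      rw [harg, F.map_add, ← nsmul_eq_mul, ← nsmul_eq_mul, F.map_nsmul, F.map_nsmul]
    refine ⟨F (d * x) - d * F x, ?_⟩
    rw [h1, nsmul_eq_mul, nsmul_eq_mul]
    push_cast
    linear_combination (-(F x)) * hd
  exact sub_eq_zero.mp (stmt18_eq_zero_of_forall_pow_dvd p _ hdvd)

/-- A subgroup of a finitely generated commutative group is finitely generated. -/
lemma stmt18_subgroup_fg {A : Type*} [CommGroup A] (hA : Group.FG A) (S : Subgroup A) :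
    Group.FG S := by
  rw [Group.fg_iff_subgroup_fg, Subgroup.fg_iff_add_fg]
  have h1 : AddGroup.FG (Additive A) := GroupFG.iff_add_fg.mp hA
  have h2 : Module.Finite ℤ (Additive A) := Module.Finite.iff_addGroup_fg.mpr h1
  have h4 := IsNoetherian.noetherian (AddSubgroup.toIntSubmodule S.toAddSubgroup)
  rw [Submodule.fg_iff_addSubgroup_fg] at h4
  simpa using h4

/-- A group embedding into a finitely generated subgroup of a commutative group is
finitely generated. -/
lemma stmt18_fg_of_injective {A : Type*} [CommGroup A] {Λ' : Type*} [Group Λ']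
    {K : Subgroup A} (hK : Group.FG K) {f : Λ' →* A} (hf : Function.Injective f)
    (hr : f.range ≤ K) : Group.FG Λ' := by
  let f' : Λ' →* K := f.codRestrict K (fun x => hr ⟨x, rfl⟩)
  have hf' : Function.Injective f' := by
    intro a b h
    exact hf (congrArg Subtype.val h)
  have hfg : Group.FG f'.range := stmt18_subgroup_fg hK f'.range
  have e := MonoidHom.ofInjective hf'
  exact Group.fg_of_surjective (f := e.symm.toMonoidHom) e.symm.surjective

/-- Let `Λ` be a non-finitely-generated group of `p`-adic units (viewed
as a discrete group acting on `ℤ_p` by multiplication), let `H = ℤ_p ⋊ Λ`, and suppose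
`H` is an open subgroup of a locally compact group `G`.  Then `G` has an open normal
subgroup `N` with `G/N` a discrete abelian group containing a copy of `Λ`, hence not
finitely generated; in particular `G` is not compactly generated. -/
theorem stmt18 (p : ℕ) [Fact p.Prime] (Λ : Type*) [Group Λ] [TopologicalSpace Λ]
    [DiscreteTopology Λ] (ρ : Λ →* ℤ_[p]ˣ) (hρ : Function.Injective ρ)
    (hΛ : ¬ Group.FG Λ)
    {G : Type*} [Group G] [TopologicalSpace G] [IsTopologicalGroup G] [LocallyCompactSpace G]
    (j : (Multiplicative ℤ_[p] ⋊[unitsAction p ρ] Λ) →* G)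
    (hj : IsOpenEmbedding ⇑j) :
    (∃ N : Subgroup G, IsOpen (N : Set G) ∧ N.Normal ∧
      ∀ [inst : N.Normal],
        (∀ a b : G ⧸ N, a * b = b * a) ∧
        DiscreteTopology (G ⧸ N) ∧
        (∃ ψ : Λ →* G ⧸ N, Function.Injective ψ) ∧
        ¬ Group.FG (G ⧸ N)) ∧
    ¬ ∃ C : Set G, IsCompact C ∧ Subgroup.closure C = ⊤ := by
  classical
  have hp := (Fact.out : p.Prime)
  -- the embedding of ℤ_p into G
  set ι : ℤ_[p] → G := fun x => j (SemidirectProduct.inl (Multiplicative.ofAdd x)) with hιdef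
  have hone : ι 0 = 1 := by
    show j (SemidirectProduct.inl (Multiplicative.ofAdd (0 : ℤ_[p]))) = 1
    rw [ofAdd_zero, map_one, map_one]
  have hadd : ∀ x y : ℤ_[p], ι (x + y) = ι x * ι y := by
    intro x y
    show j (SemidirectProduct.inl (Multiplicative.ofAdd (x + y))) = _
    rw [ofAdd_add, map_mul, map_mul]
  have hιinj : Function.Injective ι := by
    intro a b h
    exact Multiplicative.ofAdd.injective (SemidirectProduct.inl_injective (hj.injective h))
  have hιcont : Continuous ι := by
    refine hj.continuous.comp ?_
    refine continuous_induced_rng.mpr ?_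
    show Continuous fun x : ℤ_[p] => ((Multiplicative.ofAdd x : Multiplicative ℤ_[p]), (1 : Λ))
    exact continuous_ofAdd.prodMk continuous_const
  have hrange : IsOpen (Set.range ι) := by
    have h1 : Set.range ι =
        ⇑j '' ((fun w : Multiplicative ℤ_[p] ⋊[unitsAction p ρ] Λ => w.right) ⁻¹' {1}) := by
      ext g
      constructor
      · rintro ⟨x, rfl⟩
        exact ⟨SemidirectProduct.inl (Multiplicative.ofAdd x), rfl, rfl⟩
      · rintro ⟨w, hw, rfl⟩
        refine ⟨w.left.toAdd, ?_⟩
        show j (SemidirectProduct.inl (Multiplicative.ofAdd w.left.toAdd)) = j w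
        congr 1
        ext
        · rfl
        · exact (Set.mem_preimage.mp hw).symm
    rw [h1]
    refine hj.isOpenMap _ ?_
    refine IsOpen.preimage ?_ (isOpen_discrete _)
    have hcr : Continuous
        (fun w : Multiplicative ℤ_[p] ⋊[unitsAction p ρ] Λ => (w.left, w.right)) :=
      continuous_induced_dom
    exact continuous_snd.comp hcr
  have hp0 : (p : ℤ_[p]) ≠ 0 := by
    exact_mod_cast hp.ne_zero
  have hpQ0 : (p : ℚ_[p]) ≠ 0 := by
    exact_mod_cast hp.ne_zero
  -- key existence : conjugation acts by a scalar on a small subgroup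
  have hQex : ∀ g : G, ∃ n : ℕ, ∃ c : ℤ_[p], c ≠ 0 ∧
      ∀ x : ℤ_[p], g * ι ((p : ℤ_[p]) ^ n * x) * g⁻¹ = ι (c * x) := by
    intro g
    have hconj : Continuous fun h : G => g * h * g⁻¹ :=
      (continuous_mul_right g⁻¹).comp (continuous_mul_left g)
    have hUopen : IsOpen {x : ℤ_[p] | g * ι x * g⁻¹ ∈ Set.range ι} :=
      (hrange.preimage hconj).preimage hιcont
    have h0U : (0 : ℤ_[p]) ∈ {x : ℤ_[p] | g * ι x * g⁻¹ ∈ Set.range ι} := by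
      show g * ι 0 * g⁻¹ ∈ Set.range ι
      rw [hone, mul_one, mul_inv_cancel]
      exact ⟨0, hone⟩
    obtain ⟨ε, hε, hball⟩ := Metric.isOpen_iff.mp hUopen 0 h0U
    have hp1 : (1 : ℝ) < p := by exact_mod_cast hp.one_lt
    obtain ⟨n, hn⟩ := exists_pow_lt_of_lt_one hε (by rw [inv_lt_one_iff₀]; right; exact hp1)
    have hsub : ∀ x : ℤ_[p], ∃ y, ι y = g * ι ((p : ℤ_[p]) ^ n * x) * g⁻¹ := by
      intro x
      have hmem : (p : ℤ_[p]) ^ n * x ∈ Metric.ball (0 : ℤ_[p]) ε := by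
        rw [Metric.mem_ball, dist_zero_right]
        calc ‖(p : ℤ_[p]) ^ n * x‖ = ‖(p : ℤ_[p]) ^ n‖ * ‖x‖ := by
              rw [norm_mul]
          _ ≤ ‖(p : ℤ_[p]) ^ n‖ := mul_le_of_le_one_right (norm_nonneg _) x.norm_le_one
          _ = (p : ℝ) ^ (-(n : ℤ)) := PadicInt.norm_p_pow n
          _ = ((p : ℝ)⁻¹) ^ n := by rw [inv_pow, ← zpow_natCast, ← zpow_neg]
          _ < ε := hn
      obtain ⟨y, hy⟩ := hball hmem
      exact ⟨y, hy⟩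
    choose f hf using hsub
    have hfadd : ∀ x y, f (x + y) = f x + f y := by
      intro x y
      apply hιinj
      rw [hadd, hf, hf, hf]
      have h1 : (p : ℤ_[p]) ^ n * (x + y) = (p : ℤ_[p]) ^ n * x + (p : ℤ_[p]) ^ n * y := by ring
      rw [h1, hadd]
      group
    set F : ℤ_[p] →+ ℤ_[p] := AddMonoidHom.mk' f hfadd with hF
    have hlin : ∀ c x : ℤ_[p], f (c * x) = c * f x := fun c x => stmt18_linear p F c x
    refine ⟨n, f 1, ?_, ?_⟩
    · intro h0
      have h1 : ι ((p : ℤ_[p]) ^ n * 1) = g⁻¹ * ι (f 1) * g := by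
        rw [hf 1]; group
      rw [h0, hone] at h1
      have h2 : ι ((p : ℤ_[p]) ^ n * 1) = ι 0 := by
        rw [h1, hone]; group
      have := hιinj h2
      simp only [mul_one] at this
      exact pow_ne_zero n hp0 this
    · intro x
      rw [← hf x]
      congr 1
      calc f x = f (x * 1) := by rw [mul_one]
        _ = x * f 1 := hlin x 1
        _ = f 1 * x := mul_comm _ _
  choose nn cc hcc0 hQ using hQex
  -- the scalar in ℚ_p
  set lamval : G → ℚ_[p] := fun g => (cc g : ℚ_[p]) / (p : ℚ_[p]) ^ (nn g) with hlamval
  have hcoh : ∀ (g : G) (n : ℕ) (c : ℤ_[p]),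
      (∀ x : ℤ_[p], g * ι ((p : ℤ_[p]) ^ n * x) * g⁻¹ = ι (c * x)) →
      lamval g = (c : ℚ_[p]) / (p : ℚ_[p]) ^ n := by
    intro g n c h
    have e1 := hQ g ((p : ℤ_[p]) ^ n)
    have e2 := h ((p : ℤ_[p]) ^ (nn g))
    rw [mul_comm ((p : ℤ_[p]) ^ n) ((p : ℤ_[p]) ^ (nn g))] at e2
    have h1 : cc g * (p : ℤ_[p]) ^ n = c * (p : ℤ_[p]) ^ (nn g) := hιinj (e1.symm.trans e2)
    have h2 : (cc g : ℚ_[p]) * (p : ℚ_[p]) ^ n = (c : ℚ_[p]) * (p : ℚ_[p]) ^ (nn g) := by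
      exact_mod_cast congrArg (fun z : ℤ_[p] => (z : ℚ_[p])) h1
    rw [hlamval]
    rw [div_eq_div_iff (pow_ne_zero _ hpQ0) (pow_ne_zero _ hpQ0)]
    linear_combination h2
  have hne : ∀ g, lamval g ≠ 0 := by
    intro g
    exact div_ne_zero (PadicInt.coe_ne_zero.mpr (hcc0 g)) (pow_ne_zero _ hpQ0)
  have hmul : ∀ g₁ g₂ : G, lamval (g₁ * g₂) = lamval g₁ * lamval g₂ := by
    intro g₁ g₂
    have hQ12 : ∀ x : ℤ_[p], (g₁ * g₂) * ι ((p : ℤ_[p]) ^ (nn g₁ + nn g₂) * x) * (g₁ * g₂)⁻¹ =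
        ι ((cc g₁ * cc g₂) * x) := by
      intro x
      have harg : (p : ℤ_[p]) ^ (nn g₁ + nn g₂) * x =
          (p : ℤ_[p]) ^ (nn g₂) * ((p : ℤ_[p]) ^ (nn g₁) * x) := by
        rw [pow_add]; ring
      rw [harg, mul_inv_rev]
      have hassoc : g₁ * g₂ * ι ((p : ℤ_[p]) ^ (nn g₂) * ((p : ℤ_[p]) ^ (nn g₁) * x)) *
          (g₂⁻¹ * g₁⁻¹) =
          g₁ * (g₂ * ι ((p : ℤ_[p]) ^ (nn g₂) * ((p : ℤ_[p]) ^ (nn g₁) * x)) * g₂⁻¹) * g₁⁻¹ := by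
        group
      rw [hassoc, hQ g₂]
      have harg2 : cc g₂ * ((p : ℤ_[p]) ^ (nn g₁) * x) =
          (p : ℤ_[p]) ^ (nn g₁) * (cc g₂ * x) := by ring
      rw [harg2, hQ g₁]
      congr 1
      ring
    have := hcoh _ _ _ hQ12
    rw [this, hlamval]
    push_cast
    rw [pow_add]
    field_simp
  have hlamone : lamval 1 = 1 := by
    have hQ1 : ∀ x : ℤ_[p], (1 : G) * ι ((p : ℤ_[p]) ^ 0 * x) * (1 : G)⁻¹ = ι (1 * x) := by
      intro x
      rw [pow_zero]
      group
    rw [hcoh 1 0 1 hQ1]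
    simp
  -- the homomorphism λ : G →* ℚ_pˣ
  set lam : G →* ℚ_[p]ˣ :=
    { toFun := fun g => Units.mk0 (lamval g) (hne g)
      map_one' := by ext; simp [hlamone]
      map_mul' := fun a b => by ext; simp [hmul] } with hlamdef
  have hlamval_eq : ∀ g, (lam g : ℚ_[p]) = lamval g := fun g => rfl
  have hker_iff : ∀ g, g ∈ lam.ker ↔ lamval g = 1 := by
    intro g
    rw [MonoidHom.mem_ker]
    constructor
    · intro h; rw [← hlamval_eq, h]; rfl
    · intro h; ext; rw [hlamval_eq, h]; rfl
  -- the kernel contains the open subgroup ι(ℤ_p)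
  have hrange_sub : Set.range ι ⊆ (lam.ker : Set G) := by
    rintro _ ⟨x, rfl⟩
    rw [SetLike.mem_coe, hker_iff]
    have hQx : ∀ y : ℤ_[p], ι x * ι ((p : ℤ_[p]) ^ 0 * y) * (ι x)⁻¹ = ι (1 * y) := by
      intro y
      rw [pow_zero, one_mul]
      have hcomm : ι x * ι y = ι y * ι x := by
        rw [← hadd, ← hadd, add_comm]
      rw [hcomm, mul_assoc, mul_inv_cancel, mul_one]
    rw [hcoh _ 0 1 hQx]
    simp
  have hNopen : IsOpen (lam.ker : Set G) := by
    refine Subgroup.isOpen_of_mem_nhds (g := (1 : G)) _ ?_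
    exact Filter.mem_of_superset (hrange.mem_nhds ⟨0, hone⟩) hrange_sub
  -- value of λ on Λ
  have hlamΛ : ∀ a : Λ, lamval (j (SemidirectProduct.inr a)) = ((ρ a : ℤ_[p]) : ℚ_[p]) := by
    intro a
    have hQa : ∀ x : ℤ_[p], j (SemidirectProduct.inr a) * ι ((p : ℤ_[p]) ^ 0 * x) *
        (j (SemidirectProduct.inr a))⁻¹ = ι ((ρ a : ℤ_[p]) * x) := by
      intro x
      rw [pow_zero, one_mul, ← map_inv, ← map_inv, ← map_mul, ← map_mul]
      show _ = j (SemidirectProduct.inl (Multiplicative.ofAdd ((ρ a : ℤ_[p]) * x)))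
      congr 1
      have : (Multiplicative.ofAdd ((ρ a : ℤ_[p]) * x)) =
          (unitsAction p ρ) a (Multiplicative.ofAdd x) := rfl
      rw [this, SemidirectProduct.inl_aut]
    rw [hcoh _ 0 _ hQa]
    simp
  have hμinj : Function.Injective fun a : Λ => lam (j (SemidirectProduct.inr a)) := by
    intro a b h
    have h1 : ((ρ a : ℤ_[p]) : ℚ_[p]) = ((ρ b : ℤ_[p]) : ℚ_[p]) := by
      rw [← hlamΛ, ← hlamΛ, ← hlamval_eq, ← hlamval_eq]
      exact congrArg Units.val h
    have h2 : (ρ a : ℤ_[p]) = (ρ b : ℤ_[p]) := Subtype.coe_injective h1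
    exact hρ (Units.ext h2)
  -- assemble
  set N : Subgroup G := lam.ker with hNdef
  have hNnormal : N.Normal := MonoidHom.normal_ker lam
  have key : ∀ [inst : N.Normal],
      (∀ a b : G ⧸ N, a * b = b * a) ∧
      DiscreteTopology (G ⧸ N) ∧
      (∃ ψ : Λ →* G ⧸ N, Function.Injective ψ) ∧
      ¬ Group.FG (G ⧸ N) := by
    intro inst
    have hcomm : ∀ a b : G ⧸ N, a * b = b * a := by
      intro a b
      obtain ⟨x, rfl⟩ := QuotientGroup.mk_surjective a
      obtain ⟨y, rfl⟩ := QuotientGroup.mk_surjective b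
      apply QuotientGroup.kerLift_injective lam
      rw [map_mul, map_mul, mul_comm]
    have hdisc : DiscreteTopology (G ⧸ N) := by
      apply discreteTopology_of_isOpen_singleton_one
      have h1 : ((↑) : G → G ⧸ N) '' (N : Set G) = {1} := by
        ext x
        constructor
        · rintro ⟨g, hg, rfl⟩
          exact (QuotientGroup.eq_one_iff g).mpr hg
        · rintro rfl
          exact ⟨1, N.one_mem, rfl⟩
      rw [← h1]
      exact QuotientGroup.isOpenMap_coe _ hNopen
    set ψ : Λ →* G ⧸ N :=
      (QuotientGroup.mk' N).comp (j.comp SemidirectProduct.inr) with hψdef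
    have hκψ : ∀ a : Λ, QuotientGroup.kerLift lam (ψ a) = lam (j (SemidirectProduct.inr a)) :=
      fun a => QuotientGroup.kerLift_mk lam _
    have hψinj : Function.Injective ψ := by
      intro a b h
      have h2 : lam (j (SemidirectProduct.inr a)) = lam (j (SemidirectProduct.inr b)) := by
        rw [← hκψ, ← hκψ, h]
      exact hμinj h2
    refine ⟨hcomm, hdisc, ⟨ψ, hψinj⟩, ?_⟩
    intro hFG
    have hKfg : Group.FG (QuotientGroup.kerLift lam).range := Group.fg_range _
    refine hΛ (stmt18_fg_of_injective hKfg
      (f := (QuotientGroup.kerLift lam).comp ψ) ?_ ?_)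
    · intro a b h
      exact hψinj (QuotientGroup.kerLift_injective lam h)
    · rintro _ ⟨a, rfl⟩
      exact ⟨ψ a, rfl⟩
  refine ⟨⟨N, hNopen, hNnormal, key⟩, ?_⟩
  rintro ⟨C, hC, hgen⟩
  obtain ⟨hcomm, hdisc, -, hnfg⟩ := @key hNnormal
  apply hnfg
  have hπcont : Continuous ((↑) : G → G ⧸ N) := continuous_quot_mk
  have hfin : (((↑) : G → G ⧸ N) '' C).Finite := by
    have := hC.image hπcont
    exact this.finite (isDiscrete_iff_discreteTopology.mpr (by infer_instance))
  refine Group.fg_iff.mpr ⟨((↑) : G → G ⧸ N) '' C, ?_, hfin⟩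
  have h1 : Subgroup.map (QuotientGroup.mk' N) (Subgroup.closure C) =
      Subgroup.closure (((↑) : G → G ⧸ N) '' C) := MonoidHom.map_closure _ _
  rw [← h1, hgen]
  exact Subgroup.map_top_of_surjective _ (QuotientGroup.mk'_surjective N)
end
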